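/- There exists a universal constant c > 0 such that for all integers n ≥ 2, r ≥ 1 and s ≥ 1, there exists a deterministic adaptive membership-query algorithm with query budget ⌈c·(r^{s−1} + r·s·log₂ n)⌉ that exactly learns the class of all s-term r-MDNF functions on {0,1}^n. -/

import Mathlib

/-- The transcript of a deterministic adaptive membership-query algorithm with query map `σ`
run on target `f` for `m` queries: the list `(b₁, …, b_m)` with `b_i = f (σ (b₁, …, b_{i-1}))`. -/
def transcript {n : ℕ} (σ : List Bool → (Fin n → Bool)) (f : (Fin n → Bool) → Bool) :
    ℕ → List Bool
  | 0 => []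
  | m + 1 => transcript σ f m ++ [f (σ (transcript σ f m))]

/-- `f : {0,1}^n → {0,1}` is an `s`-term `r`-MDNF if there are `p ≤ s` nonempty subsets
`T₁, …, T_p` of the coordinates, each of size at most `r`, such that `f a = 1` iff
for some `i` all coordinates of `a` indexed by `T i` equal `1`. -/
def IsMDNF (n s r : ℕ) (f : (Fin n → Bool) → Bool) : Prop :=
  ∃ (p : ℕ) (T : Fin p → Finset (Fin n)), p ≤ s ∧
    (∀ i, (T i).Nonempty ∧ (T i).card ≤ r) ∧
    ∀ a : Fin n → Bool, f a = true ↔ ∃ i, ∀ j ∈ T i, a j = true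

namespace MDNF
open Finset

variable {n : ℕ}

/-- characteristic point of a set of coordinates -/
def pt (A : Finset (Fin n)) : Fin n → Bool := fun i => decide (i ∈ A)

/-- all lists of length `k` with entries `< r` -/
def allv (r : ℕ) : ℕ → List (List ℕ)
  | 0 => [[]]
  | k+1 => (List.range r).flatMap fun d => (allv r k).map (d :: ·)

lemma mem_allv {r k : ℕ} {v : List ℕ} :
    v ∈ allv r k ↔ v.length = k ∧ ∀ d ∈ v, d < r := by
  induction k generalizing v with
  | zero =>
    simp only [allv, List.mem_singleton]
    constructor
    · rintro rfl; simp
    · rintro ⟨hl, -⟩; exact List.length_eq_zero_iff.mp hl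
  | succ k ih =>
    cases v with
    | nil =>
      simp only [allv, List.mem_flatMap, List.mem_map, List.mem_range]
      constructor
      · rintro ⟨d, -, v', -, h⟩; cases h
      · rintro ⟨h, -⟩; cases h
    | cons d v =>
      simp only [allv, List.mem_flatMap, List.mem_map, List.mem_range]
      constructor
      · rintro ⟨d', hd', v', hv', h⟩
        obtain ⟨rfl, rfl⟩ : d' = d ∧ v' = v := by
          injection h with h1 h2; exact ⟨h1, h2⟩
        obtain ⟨hl, hv⟩ := ih.mp hv'
        refine ⟨by simp [hl], ?_⟩
        intro e he
        rcases List.mem_cons.mp he with rfl | he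
        · exact hd'
        · exact hv e he
      · rintro ⟨hl, hv⟩
        exact ⟨d, hv d (List.mem_cons_self), v,
          ih.mpr ⟨by simpa using hl, fun e he => hv e (List.mem_cons_of_mem _ he)⟩, rfl⟩

lemma length_allv (r k : ℕ) : (allv r k).length = r ^ k := by
  induction k with
  | zero => simp [allv]
  | succ k ih =>
    rw [allv, List.length_flatMap]
    have : (List.map (fun d => (List.map (fun x => d :: x) (allv r k)).length)
        (List.range r)) = List.map (fun _ => r ^ k) (List.range r) := by
      simp [Function.comp_def, ih]
    rw [this, List.map_const', List.sum_replicate, smul_eq_mul, List.length_range,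
      pow_succ, mul_comm]

/-- coordinates to be set to zero given found terms `ts` and choice vector `v` -/
noncomputable def zeros (ts : List (Finset (Fin n))) (v : List ℕ) : List (Fin n) :=
  (ts.zip v).filterMap fun Td => Td.1.toList[Td.2 % Td.1.toList.length]?

noncomputable def checkA (ts : List (Finset (Fin n))) (v : List ℕ) : Finset (Fin n) :=
  univ \ (zeros ts v).toFinset

inductive St (n : ℕ) where
  | check (ts : List (Finset (Fin n))) (rem : List (List ℕ))
  | mini (ts : List (Finset (Fin n))) (A C : Finset (Fin n)) (lo hi : ℕ)
  | done (ts : List (Finset (Fin n)))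

/-- the query asked in a given state -/
noncomputable def qry : St n → (Fin n → Bool)
  | .check ts (v :: _) => pt (checkA ts v)
  | .check _ [] => pt univ
  | .mini _ A C lo hi => if lo < hi then pt (C ∪ A.filter fun j => (j : ℕ) < (lo+hi)/2)
      else pt univ
  | .done _ => pt univ

variable (r s : ℕ)

/-- state update given the answer to the query -/
noncomputable def upd : St n → Bool → St n
  | .check ts (v :: rem'), b =>
      if b then .mini ts (checkA ts v) ∅ 0 n
      else if rem' = [] then .done ts else .check ts rem'
  | .check ts [], _ => .done ts
  | .mini ts A C lo hi, b =>
      if lo < hi then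
        (if b then .mini ts A C lo ((lo+hi)/2) else .mini ts A C ((lo+hi)/2+1) hi)
      else if lo = 0 then
        (if ts.length + 1 < s then .check (ts ++ [C]) (allv r (ts.length+1))
         else .done (ts ++ [C]))
      else .mini ts (C ∪ A.filter fun j => (j : ℕ) < lo)
            (C ∪ A.filter fun j => (j : ℕ) = lo - 1) 0 (lo - 1)
  | .done ts, _ => .done ts

def getTs : St n → List (Finset (Fin n))
  | .check ts _ => ts
  | .mini ts _ _ _ _ => ts
  | .done ts => ts

def evalT (ts : List (Finset (Fin n))) (a : Fin n → Bool) : Bool :=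
  ts.any fun M => decide (∀ j ∈ M, a j = true)

noncomputable def init : St n := .check [] (allv r 0)

variable (f : (Fin n → Bool) → Bool)

noncomputable def run : ℕ → St n
  | 0 => init r
  | t+1 => upd r s (run t) (f (qry (run t)))

/-- value of `f` on the characteristic point of `A` -/
def F (A : Finset (Fin n)) : Bool := f (pt A)

/-- `M` is a minterm of `f` -/
def Mint (M : Finset (Fin n)) : Prop :=
  F f M = true ∧ ∀ B ⊆ M, F f B = true → B = M

/-- abstract consequences of being an s-term r-MDNF -/
structure Nice (f : (Fin n → Bool) → Bool) (r s : ℕ) : Prop where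
  mono : ∀ {A B : Finset (Fin n)}, A ⊆ B → F f A = true → F f B = true
  minterm_sub : ∀ {A : Finset (Fin n)}, F f A = true → ∃ M, M ⊆ A ∧ Mint f M
  card_le : ∀ {M : Finset (Fin n)}, Mint f M → M.card ≤ r ∧ M.Nonempty
  count : ∀ (L : List (Finset (Fin n))), L.Nodup → (∀ M ∈ L, Mint f M) →
    s ≤ L.length → ∀ M, Mint f M → M ∈ L

lemma pt_supp (a : Fin n → Bool) : pt (univ.filter fun i => a i = true) = a := by
  funext i
  by_cases h : a i = true <;> simp [pt, h]

section Nice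

variable {f : (Fin n → Bool) → Bool} {r s : ℕ}

lemma isMDNF_nice (hf : IsMDNF n s r f) : Nice f r s := by
  obtain ⟨p, T, hp, hT, hval⟩ := hf
  have hF : ∀ A : Finset (Fin n), F f A = true ↔ ∃ i, T i ⊆ A := by
    intro A
    rw [F, hval]
    constructor
    · rintro ⟨i, hi⟩
      exact ⟨i, fun j hj => by simpa [pt] using hi j hj⟩
    · rintro ⟨i, hi⟩
      exact ⟨i, fun j hj => by simp [pt, hi hj]⟩
  have mono : ∀ {A B : Finset (Fin n)}, A ⊆ B → F f A = true → F f B = true := by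
    intro A B hAB hA
    obtain ⟨i, hi⟩ := (hF A).mp hA
    exact (hF B).mpr ⟨i, hi.trans hAB⟩
  have msub : ∀ (A : Finset (Fin n)), F f A = true → ∃ M, M ⊆ A ∧ Mint f M := by
    intro A
    induction A using Finset.strongInduction with
    | _ A ih =>
      intro hA
      by_cases hmin : ∀ B ⊆ A, F f B = true → B = A
      · exact ⟨A, Finset.Subset.refl A, hA, hmin⟩
      · push_neg at hmin
        obtain ⟨B, hBA, hB, hne⟩ := hmin
        obtain ⟨M, hMB, hM⟩ := ih B (Finset.ssubset_iff_subset_ne.mpr ⟨hBA, hne⟩) hB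
        exact ⟨M, hMB.trans hBA, hM⟩
  have meq : ∀ {M : Finset (Fin n)}, Mint f M → ∃ i, T i = M := by
    rintro M ⟨hM, hmin⟩
    obtain ⟨i, hi⟩ := (hF M).mp hM
    exact ⟨i, hmin _ hi ((hF _).mpr ⟨i, Finset.Subset.refl _⟩)⟩
  refine ⟨mono, fun {A} hA => msub A hA, ?_, ?_⟩
  · intro M hM
    obtain ⟨i, rfl⟩ := meq hM
    exact ⟨(hT i).2, (hT i).1⟩
  · intro L hnd hmem hlen M hM
    by_contra hMn
    have hsub : insert M L.toFinset ⊆ Finset.image T Finset.univ := by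
      intro X hX
      rcases Finset.mem_insert.mp hX with rfl | hX
      · obtain ⟨i, hi⟩ := meq hM
        exact Finset.mem_image.mpr ⟨i, Finset.mem_univ _, hi⟩
      · obtain ⟨i, hi⟩ := meq (hmem X (List.mem_toFinset.mp hX))
        exact Finset.mem_image.mpr ⟨i, Finset.mem_univ _, hi⟩
    have h1 : L.length + 1 ≤ p := by
      calc L.length + 1 = (insert M L.toFinset).card := by
            rw [Finset.card_insert_of_notMem (by simpa using hMn),
              List.toFinset_card_of_nodup hnd]
          _ ≤ (Finset.image T Finset.univ).card := Finset.card_le_card hsub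
          _ ≤ (Finset.univ : Finset (Fin p)).card := Finset.card_image_le
          _ = p := by simp
    omega

lemma mint_card (hN : Nice f r s) {M : Finset (Fin n)} (hM : Mint f M) : M.card ≤ r :=
  (hN.card_le hM).1

lemma mint_ne (hN : Nice f r s) {M : Finset (Fin n)} (hM : Mint f M) : M.Nonempty :=
  (hN.card_le hM).2

/-- if a nodup list of minterms contains all minterms, its evaluation equals f -/
lemma evalT_eq (hN : Nice f r s) {ts : List (Finset (Fin n))}
    (hmem : ∀ M ∈ ts, Mint f M) (hall : ∀ M, Mint f M → M ∈ ts) :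
    ∀ a, evalT ts a = f a := by
  intro a
  have hsupp : f a = F f (univ.filter fun i => a i = true) := by
    rw [F, pt_supp]
  rw [Bool.eq_iff_iff, evalT, List.any_eq_true, hsupp]
  constructor
  · rintro ⟨M, hMts, hMa⟩
    have hMa' : ∀ j ∈ M, a j = true := by simpa using hMa
    have hsub : M ⊆ univ.filter fun i => a i = true := by
      intro j hj
      simp [hMa' j hj]
    exact hN.mono hsub (hmem M hMts).1
  · intro hFa
    obtain ⟨M, hMsub, hM⟩ := hN.minterm_sub hFa
    refine ⟨M, hall M hM, by simpa using fun j hj => (Finset.mem_filter.mp (hMsub hj)).2⟩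

end Nice

lemma zeros_cons_of_nonempty {T : Finset (Fin n)} (hT : T.Nonempty)
    (ts : List (Finset (Fin n))) (d : ℕ) (v : List ℕ) :
    zeros (T :: ts) (d :: v) =
      T.toList[d % T.toList.length]'(Nat.mod_lt _ (by
        rw [Finset.length_toList]; exact Finset.card_pos.mpr hT)) :: zeros ts v := by
  have hlen : 0 < T.toList.length := by
    rw [Finset.length_toList]; exact Finset.card_pos.mpr hT
  have hidx : d % T.toList.length < T.toList.length := Nat.mod_lt _ hlen
  rw [zeros, List.zip_cons_cons, List.filterMap_cons]
  rw [List.getElem?_eq_getElem hidx]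
  rfl

lemma zeros_mem_of_mem {ts : List (Finset (Fin n))} {v : List ℕ}
    (hlen : v.length = ts.length) (hne : ∀ T ∈ ts, T.Nonempty) :
    ∀ T ∈ ts, ∃ y ∈ T, y ∈ zeros ts v := by
  induction ts generalizing v with
  | nil => intro T hT; cases hT
  | cons T0 ts ih =>
    cases v with
    | nil => simp at hlen
    | cons d v =>
      have hT0 : T0.Nonempty := hne T0 (List.mem_cons_self)
      rw [zeros_cons_of_nonempty hT0]
      intro T hT
      rcases List.mem_cons.mp hT with rfl | hT
      · exact ⟨_, Finset.mem_toList.mp (List.getElem_mem _), List.mem_cons_self⟩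
      · obtain ⟨y, hy1, hy2⟩ := ih (by simpa using hlen)
          (fun T' hT' => hne T' (List.mem_cons_of_mem _ hT')) T hT
        exact ⟨y, hy1, List.mem_cons_of_mem _ hy2⟩

lemma exists_good_v {M : Finset (Fin n)} {r : ℕ} {ts : List (Finset (Fin n))}
    (h : ∀ T ∈ ts, T.card ≤ r ∧ ∃ x ∈ T, x ∉ M) :
    ∃ v : List ℕ, v.length = ts.length ∧ (∀ d ∈ v, d < r) ∧
      ∀ x ∈ zeros ts v, x ∉ M := by
  induction ts with
  | nil => exact ⟨[], rfl, by simp, by simp [zeros]⟩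
  | cons T ts ih =>
    obtain ⟨hcard, x, hxT, hxM⟩ := h T (List.mem_cons_self)
    obtain ⟨v, hv1, hv2, hv3⟩ := ih fun T' hT' => h T' (List.mem_cons_of_mem _ hT')
    have hxl : x ∈ T.toList := Finset.mem_toList.mpr hxT
    set d := T.toList.idxOf x with hd
    have hdlt : d < T.toList.length := List.idxOf_lt_length_iff.mpr hxl
    have hdr : d < r := by
      have := Finset.length_toList T
      omega
    refine ⟨d :: v, by simp [hv1], ?_, ?_⟩
    · intro e he
      rcases List.mem_cons.mp he with rfl | he
      · exact hdr
      · exact hv2 e he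
    · rw [zeros_cons_of_nonempty ⟨x, hxT⟩]
      intro y hy
      rcases List.mem_cons.mp hy with rfl | hy
      · have heq : T.toList[d % T.toList.length]'(Nat.mod_lt _ (by omega)) = x := by
          simp only [Nat.mod_eq_of_lt hdlt]
          exact List.getElem_idxOf hdlt
        rw [heq]
        exact hxM
      · exact hv3 y hy

lemma subset_checkA {M : Finset (Fin n)} {ts : List (Finset (Fin n))} {v : List ℕ}
    (h : ∀ x ∈ zeros ts v, x ∉ M) : M ⊆ checkA ts v := by
  intro j hj
  rw [checkA, Finset.mem_sdiff]
  exact ⟨Finset.mem_univ _, fun hc => h j (List.mem_toFinset.mp hc) hj⟩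

lemma not_subset_checkA {T : Finset (Fin n)} {ts : List (Finset (Fin n))} {v : List ℕ}
    {y : Fin n} (hy : y ∈ T) (hz : y ∈ zeros ts v) : ¬ T ⊆ checkA ts v := by
  intro hsub
  have := hsub hy
  rw [checkA, Finset.mem_sdiff] at this
  exact this.2 (List.mem_toFinset.mpr hz)


def tsOK (f : (Fin n → Bool) → Bool) (ts : List (Finset (Fin n))) : Prop :=
  ts.Nodup ∧ ∀ M ∈ ts, Mint f M

def Inv (f : (Fin n → Bool) → Bool) (r s : ℕ) : St n → Prop
  | .check ts rem => tsOK f ts ∧ ts.length < s ∧ rem ≠ [] ∧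
      ∃ pre, pre ++ rem = allv r ts.length ∧ ∀ v ∈ pre, F f (checkA ts v) = false
  | .mini ts A C lo hi => tsOK f ts ∧ ts.length < s ∧ C ⊆ A ∧
      (∀ B ⊆ A, F f B = true → C ⊆ B) ∧ (∀ M ∈ ts, ¬ M ⊆ A) ∧
      lo ≤ hi ∧ hi ≤ n ∧ F f (C ∪ A.filter fun j => (j : ℕ) < hi) = true ∧
      (lo = 0 ∨ F f (C ∪ A.filter fun j => (j : ℕ) < lo - 1) = false)
  | .done ts => ∀ a, evalT ts a = f a

/-- cost of one full minimization phase plus slack -/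
def Mc (n r : ℕ) : ℕ := (r + 2) * (Nat.size n + 2) + 2

def G (r s k : ℕ) : ℕ := ∑ j ∈ Finset.Ico k s, r ^ j

def rank (r s : ℕ) : St n → ℕ
  | .check ts rem => G r s (ts.length + 1) + rem.length + (s - ts.length) * Mc n r
  | .mini ts _ C lo hi => G r s (ts.length + 1) + (s - ts.length - 1) * Mc n r +
      (r + 1 - C.card) * (Nat.size n + 2) + (hi - lo).size + 2
  | .done _ => 0

lemma G_succ {r s k : ℕ} (h : k < s) : G r s k = r ^ k + G r s (k + 1) :=
  Finset.sum_eq_sum_Ico_succ_bot h _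

lemma filter_lt_zero (A : Finset (Fin n)) : (A.filter fun j : Fin n => (j : ℕ) < 0) = ∅ := by
  ext j; simp

lemma filter_lt_n (A : Finset (Fin n)) : (A.filter fun j : Fin n => (j : ℕ) < n) = A := by
  ext j; simp [j.isLt]

lemma size_half_lt {d : ℕ} (hd : 1 ≤ d) {d' : ℕ} (h : d' ≤ d / 2) :
    d'.size + 1 ≤ d.size := by
  have h1 : 1 ≤ d.size := Nat.size_pos.mpr hd
  have h2 : d < 2 ^ d.size := Nat.lt_size_self d
  have h3 : 2 ^ d.size = 2 * 2 ^ (d.size - 1) := by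
    conv_lhs => rw [show d.size = (d.size - 1) + 1 by omega]
    rw [pow_succ, mul_comm]
  have h4 : d' < 2 ^ (d.size - 1) := by omega
  have := Nat.size_le.mpr h4
  omega

section Nice2

variable {f : (Fin n → Bool) → Bool} {r s : ℕ}

lemma all_false_minterms (hN : Nice f r s) {ts : List (Finset (Fin n))}
    (hOK : tsOK f ts)
    (hfalse : ∀ v ∈ allv r ts.length, F f (checkA ts v) = false) :
    ∀ M, Mint f M → M ∈ ts := by
  intro M hM
  by_contra hMn
  have hprop : ∀ T ∈ ts, T.card ≤ r ∧ ∃ x ∈ T, x ∉ M := by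
    intro T hT
    have hT' := hOK.2 T hT
    refine ⟨(hN.card_le hT').1, ?_⟩
    by_contra h
    push_neg at h
    have : T = M := hM.2 T (fun x hx => h x hx) hT'.1
    exact hMn (this ▸ hT)
  obtain ⟨v, hv1, hv2, hv3⟩ := exists_good_v hprop
  have hvmem : v ∈ allv r ts.length := mem_allv.mpr ⟨hv1, hv2⟩
  have htrue : F f (checkA ts v) = true := hN.mono (subset_checkA hv3) hM.1
  rw [hfalse v hvmem] at htrue
  cases htrue

/-- in a minimization state, `C` has at most `r` elements -/
lemma cardC_le (hN : Nice f r s) {A C : Finset (Fin n)} {hi : ℕ}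
    (hCA : C ⊆ A) (hcrit : ∀ B ⊆ A, F f B = true → C ⊆ B)
    (hPhi : F f (C ∪ A.filter fun j => (j : ℕ) < hi) = true) : C.card ≤ r := by
  have hsub : (C ∪ A.filter fun j => (j : ℕ) < hi) ⊆ A := by
    intro j hj
    rcases Finset.mem_union.mp hj with hj | hj
    · exact hCA hj
    · exact (Finset.mem_filter.mp hj).1
  have hFA : F f A = true := hN.mono hsub hPhi
  obtain ⟨M, hMA, hM⟩ := hN.minterm_sub hFA
  exact le_trans (Finset.card_le_card (hcrit M hMA hM.1)) (hN.card_le hM).1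

lemma mul_split {a M : ℕ} (h : 1 ≤ a) : a * M = (a - 1) * M + M := by
  conv_lhs => rw [show a = (a - 1) + 1 by omega]
  rw [add_mul, one_mul]

lemma step_check (hN : Nice f r s) (hr : 1 ≤ r) {ts : List (Finset (Fin n))}
    {rem : List (List ℕ)} (hI : Inv f r s (.check ts rem)) :
    Inv f r s (upd r s (.check ts rem) (f (qry (.check ts rem)))) ∧
      rank r s (upd r s (.check ts rem) (f (qry (.check ts rem)))) <
        rank r s (.check ts rem) := by
  obtain ⟨hOK, hks, hne, pre, hpre, hprefalse⟩ := hI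
  cases rem with
  | nil => exact absurd rfl hne
  | cons v rem' =>
    have hvmem : v ∈ allv r ts.length := by
      rw [← hpre]
      exact List.mem_append_right _ (List.mem_cons_self)
    have hvlen : v.length = ts.length := (mem_allv.mp hvmem).1
    have hq : f (qry (St.check ts (v :: rem'))) = F f (checkA ts v) := rfl
    have e1 : (s - ts.length) * Mc n r = (s - ts.length - 1) * Mc n r + Mc n r :=
      mul_split (by omega)
    have e2 : Mc n r = (r + 1) * (Nat.size n + 2) + (Nat.size n + 4) := by
      unfold Mc; ring
    rw [hq]
    cases hb : F f (checkA ts v) with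
    | true =>
      -- found a positive point: start minimization
      constructor
      · refine ⟨hOK, hks, Finset.empty_subset _, fun B _ _ => Finset.empty_subset _,
          ?_, Nat.zero_le _, le_refl n, ?_, Or.inl rfl⟩
        · -- blocked terms
          intro M hM hsub
          obtain ⟨y, hy1, hy2⟩ := zeros_mem_of_mem hvlen
            (fun T hT => (hN.card_le (hOK.2 T hT)).2) M hM
          exact not_subset_checkA hy1 hy2 hsub
        · rwa [Finset.empty_union, filter_lt_n]
      · simp only [upd, if_pos, rank, Finset.card_empty, Nat.sub_zero, List.length_cons]
        omega
    | false =>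
      by_cases hrem : rem' = []
      · subst hrem
        simp only [upd, Bool.false_eq_true, if_false, if_pos rfl, if_true, eq_self_iff_true]
        constructor
        · -- done state is correct
          have hfalse : ∀ w ∈ allv r ts.length, F f (checkA ts w) = false := by
            intro w hw
            rw [← hpre] at hw
            rcases List.mem_append.mp hw with hw | hw
            · exact hprefalse w hw
            · rcases List.mem_cons.mp hw with rfl | hw
              · exact hb
              · cases hw
          exact evalT_eq hN hOK.2 (all_false_minterms hN hOK hfalse)
        · simp only [rank, List.length_cons]
          omega
      · simp only [upd, Bool.false_eq_true, if_false, if_neg hrem]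
        constructor
        · refine ⟨hOK, hks, hrem, pre ++ [v], by simpa using hpre, ?_⟩
          intro w hw
          rcases List.mem_append.mp hw with hw | hw
          · exact hprefalse w hw
          · rcases List.mem_cons.mp hw with rfl | hw
            · exact hb
            · cases hw
        · simp only [rank, List.length_cons]
          omega

lemma step_mini (hN : Nice f r s) (hr : 1 ≤ r) {ts : List (Finset (Fin n))}
    {A C : Finset (Fin n)} {lo hi : ℕ} (hI : Inv f r s (.mini ts A C lo hi)) :
    Inv f r s (upd r s (.mini ts A C lo hi) (f (qry (.mini ts A C lo hi)))) ∧
      rank r s (upd r s (.mini ts A C lo hi) (f (qry (.mini ts A C lo hi)))) <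
        rank r s (.mini ts A C lo hi) := by
  obtain ⟨hOK, hks, hCA, hcrit, hblock, hlohi, hhin, hPhi, hdich⟩ := hI
  have hcard : C.card ≤ r := cardC_le hN hCA hcrit hPhi
  by_cases hlt : lo < hi
  · -- binary search step
    have hq : f (qry (St.mini ts A C lo hi)) =
        F f (C ∪ A.filter fun j => (j : ℕ) < (lo + hi) / 2) := by
      rw [qry, if_pos hlt]; rfl
    rw [hq]
    have hsz : ((lo + hi) / 2 - lo).size + 1 ≤ (hi - lo).size :=
      size_half_lt (by omega) (by omega)
    have hsz2 : (hi - ((lo + hi) / 2 + 1)).size + 1 ≤ (hi - lo).size :=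
      size_half_lt (by omega) (by omega)
    cases hb : F f (C ∪ A.filter fun j => (j : ℕ) < (lo + hi) / 2) with
    | true =>
      simp only [upd, if_pos hlt, if_true]
      refine ⟨⟨hOK, hks, hCA, hcrit, hblock, by omega, by omega, hb, hdich⟩, ?_⟩
      simp only [rank]
      omega
    | false =>
      simp only [upd, if_pos hlt, Bool.false_eq_true, if_false]
      refine ⟨⟨hOK, hks, hCA, hcrit, hblock, by omega, hhin, hPhi, Or.inr ?_⟩, ?_⟩
      · simpa using hb
      · simp only [rank]
        omega
  · have hleq : lo = hi := by omega
    subst hleq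
    by_cases hlo : lo = 0
    · -- C is a new minterm
      subst hlo
      have hFC : F f C = true := by
        rwa [filter_lt_zero, Finset.union_empty] at hPhi
      have hMC : Mint f C := by
        refine ⟨hFC, fun B hBC hB => ?_⟩
        exact Finset.Subset.antisymm hBC (hcrit B (hBC.trans hCA) hB)
      have hCnots : C ∉ ts := fun h => hblock C h hCA
      have hOK' : tsOK f (ts ++ [C]) := by
        constructor
        · rw [List.nodup_append]
          exact ⟨hOK.1, List.nodup_singleton C, by
            intro a ha b hb'
            rcases List.mem_singleton.mp hb' with rfl
            exact fun h => hCnots (h ▸ ha)⟩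
        · intro M hM
          rcases List.mem_append.mp hM with hM | hM
          · exact hOK.2 M hM
          · rcases List.mem_singleton.mp hM with rfl
            exact hMC
      have hupd : upd r s (St.mini ts A C 0 0) (f (qry (St.mini ts A C 0 0))) =
          if ts.length + 1 < s then St.check (ts ++ [C]) (allv r (ts.length + 1))
          else St.done (ts ++ [C]) := by
        simp [upd]
      rw [hupd]
      by_cases hlen : ts.length + 1 < s
      · rw [if_pos hlen]
        constructor
        · refine ⟨hOK', by simpa using hlen, ?_, [], by simp, by simp⟩
          have hpos : 0 < (allv r (ts.length + 1)).length := by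
            rw [length_allv]
            exact pow_pos hr _
          intro h
          rw [h] at hpos
          simp at hpos
        · simp only [rank, List.length_append, List.length_singleton, length_allv]
          have eG : G r s (ts.length + 1) = r ^ (ts.length + 1) + G r s (ts.length + 1 + 1) :=
            G_succ hlen
          have e4 : s - (ts.length + 1) = s - ts.length - 1 := by omega
          rw [e4]
          have hstep : 1 ≤ r + 1 - C.card := by omega
          have e5 : (r + 1 - C.card) * (Nat.size n + 2) =
              (r + 1 - C.card - 1) * (Nat.size n + 2) + (Nat.size n + 2) := mul_split hstep
          omega
      · rw [if_neg hlen]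
        constructor
        · exact evalT_eq hN hOK'.2
            (hN.count (ts ++ [C]) hOK'.1 hOK'.2
              (by simp only [List.length_append, List.length_singleton]; omega))
        · simp only [rank]
          omega
    · -- lo = hi ≥ 1 : a new critical coordinate has been found
      have hPlo : F f (C ∪ A.filter fun j => (j : ℕ) < lo) = true := hPhi
      have hPlo1 : F f (C ∪ A.filter fun j => (j : ℕ) < lo - 1) = false :=
        hdich.resolve_left hlo
      have hx : ∃ x, x ∈ A ∧ (x : ℕ) = lo - 1 ∧ x ∉ C := by
        by_contra h
        push_neg at h
        have hsub : (C ∪ A.filter fun j => (j : ℕ) < lo) ⊆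
            (C ∪ A.filter fun j => (j : ℕ) < lo - 1) := by
          intro j hj
          rcases Finset.mem_union.mp hj with hj | hj
          · exact Finset.mem_union_left _ hj
          · obtain ⟨hjA, hjlt⟩ := Finset.mem_filter.mp hj
            by_cases hje : (j : ℕ) = lo - 1
            · exact Finset.mem_union_left _ (h j hjA hje)
            · exact Finset.mem_union_right _ (Finset.mem_filter.mpr ⟨hjA, by omega⟩)
        have := hN.mono hsub hPlo
        rw [hPlo1] at this
        cases this
      obtain ⟨x, hxA, hxval, hxC⟩ := hx
      have hfeq : (A.filter fun j : Fin n => (j : ℕ) = lo - 1) = {x} := by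
        ext j
        simp only [Finset.mem_filter, Finset.mem_singleton]
        constructor
        · rintro ⟨hjA, hje⟩
          exact Fin.ext (by omega)
        · rintro rfl
          exact ⟨hxA, hxval⟩
      have hupd : upd r s (St.mini ts A C lo lo) (f (qry (St.mini ts A C lo lo))) =
          St.mini ts (C ∪ A.filter fun j : Fin n => (j : ℕ) < lo) (C ∪ {x}) 0 (lo - 1) := by
        simp [upd, hlo, hfeq]
      rw [hupd]
      have hA'A : (C ∪ A.filter fun j => (j : ℕ) < lo) ⊆ A := by
        intro j hj
        rcases Finset.mem_union.mp hj with hj | hj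
        · exact hCA hj
        · exact (Finset.mem_filter.mp hj).1
      have hxA' : x ∈ C ∪ A.filter fun j => (j : ℕ) < lo :=
        Finset.mem_union_right _ (Finset.mem_filter.mpr ⟨hxA, by omega⟩)
      constructor
      · refine ⟨hOK, hks, ?_, ?_, ?_, Nat.zero_le _, by omega, ?_, Or.inl rfl⟩
        · -- C ∪ {x} ⊆ A'
          refine Finset.union_subset (fun j hj => Finset.mem_union_left _ hj) ?_
          simpa using hxA'
        · -- criticality of C ∪ {x}
          intro B hBA' hB
          have hCB : C ⊆ B := hcrit B (hBA'.trans hA'A) hB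
          have hxB : x ∈ B := by
            by_contra hxB
            have hsub : B ⊆ C ∪ A.filter fun j => (j : ℕ) < lo - 1 := by
              intro j hj
              rcases Finset.mem_union.mp (hBA' hj) with hjC | hjf
              · exact Finset.mem_union_left _ hjC
              · obtain ⟨hjA, hjlt⟩ := Finset.mem_filter.mp hjf
                by_cases hje : (j : ℕ) = lo - 1
                · exact absurd (Fin.ext (by omega) : j = x) (fun h => hxB (h ▸ hj))
                · exact Finset.mem_union_right _ (Finset.mem_filter.mpr ⟨hjA, by omega⟩)
            have := hN.mono hsub hB
            rw [hPlo1] at this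
            cases this
          exact Finset.union_subset hCB (by simpa using hxB)
        · -- blocked
          intro M hM hsub
          exact hblock M hM (hsub.trans hA'A)
        · -- F value at new (C', A', hi' = lo - 1)
          have hset : ((C ∪ {x}) ∪ (C ∪ A.filter fun j => (j : ℕ) < lo).filter
              fun j => (j : ℕ) < lo - 1) = C ∪ A.filter fun j => (j : ℕ) < lo := by
            ext j
            constructor
            · intro hj
              rcases Finset.mem_union.mp hj with hj | hj
              · rcases Finset.mem_union.mp hj with hj | hj
                · exact Finset.mem_union_left _ hj
                · rcases Finset.mem_singleton.mp hj with rfl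
                  exact hxA'
              · exact (Finset.mem_filter.mp hj).1
            · intro hj
              rcases Finset.mem_union.mp hj with hjC | hjf
              · exact Finset.mem_union_left _ (Finset.mem_union_left _ hjC)
              · obtain ⟨hjA, hjlt⟩ := Finset.mem_filter.mp hjf
                by_cases hje : (j : ℕ) = lo - 1
                · have : j = x := Fin.ext (by omega)
                  subst this
                  exact Finset.mem_union_left _ (Finset.mem_union_right _ (by simp))
                · refine Finset.mem_union_right _ (Finset.mem_filter.mpr ⟨?_, by omega⟩)
                  exact Finset.mem_union_right _ (Finset.mem_filter.mpr ⟨hjA, hjlt⟩)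
          rw [hset]
          exact hPlo
      · -- rank decreases
        have hcardC' : (C ∪ {x}).card = C.card + 1 := by
          rw [Finset.union_comm]
          rw [show ({x} ∪ C : Finset (Fin n)) = insert x C from rfl]
          exact Finset.card_insert_of_notMem hxC
        simp only [rank, hcardC']
        have hsz3 : (lo - 1 - 0).size ≤ Nat.size n := Nat.size_le_size (by omega)
        have hstep : 1 ≤ r + 1 - C.card := by omega
        have e5 : (r + 1 - C.card) * (Nat.size n + 2) =
            (r + 1 - C.card - 1) * (Nat.size n + 2) + (Nat.size n + 2) := mul_split hstep
        have e6 : r + 1 - (C.card + 1) = r + 1 - C.card - 1 := by omega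
        rw [e6]
        have hsz0 : (lo - lo).size = 0 := by simp
        omega

lemma step_main (hN : Nice f r s) (hr : 1 ≤ r) {st : St n} (hI : Inv f r s st) :
    Inv f r s (upd r s st (f (qry st))) ∧
      ((∃ ts, st = .done ts) ∨
        rank r s (upd r s st (f (qry st))) < rank r s st) := by
  cases st with
  | done ts => exact ⟨hI, Or.inl ⟨ts, rfl⟩⟩
  | check ts rem =>
    obtain ⟨h1, h2⟩ := step_check hN hr hI
    exact ⟨h1, Or.inr h2⟩
  | mini ts A C lo hi =>
    obtain ⟨h1, h2⟩ := step_mini hN hr hI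
    exact ⟨h1, Or.inr h2⟩

lemma inv_init (hs : 1 ≤ s) : Inv f r s (init r : St n) := by
  refine ⟨⟨List.nodup_nil, by simp⟩, by simp; omega, by simp [allv], [], by simp, by simp⟩

lemma run_invariant (hN : Nice f r s) (hr : 1 ≤ r) (hs : 1 ≤ s) :
    ∀ t, Inv f r s (run r s f t)
  | 0 => inv_init hs
  | t + 1 => (step_main hN hr (run_invariant hN hr hs t)).1

lemma rank_pos_of_not_done {st : St n} (hI : Inv f r s st)
    (h : ∀ ts, st ≠ .done ts) : 1 ≤ rank r s st := by
  cases st with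
  | done ts => exact absurd rfl (h ts)
  | check ts rem =>
    obtain ⟨-, hks, -, -⟩ := hI
    have h1 : 2 ≤ Mc n r := by unfold Mc; omega
    have h2 : Mc n r ≤ (s - ts.length) * Mc n r :=
      Nat.le_mul_of_pos_left _ (by omega)
    simp only [rank]
    omega
  | mini ts A C lo hi =>
    simp only [rank]
    omega

lemma run_reaches (hN : Nice f r s) (hr : 1 ≤ r) (hs : 1 ≤ s) :
    ∀ t, (∃ ts, run r s f t = .done ts) ∨
      rank r s (run r s f t) + t ≤ rank r s (init r : St n) := by
  intro t
  induction t with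
  | zero => exact Or.inr (by simp [run])
  | succ t ih =>
    rcases ih with ⟨ts, hts⟩ | hrk
    · left
      exact ⟨ts, by rw [run, hts]; rfl⟩
    · obtain ⟨-, hdec⟩ := step_main hN hr (run_invariant hN hr hs t)
      rcases hdec with ⟨ts, hts⟩ | hlt
      · left
        exact ⟨ts, by rw [run, hts]; rfl⟩
      · right
        rw [run]
        omega

lemma run_done (hN : Nice f r s) (hr : 1 ≤ r) (hs : 1 ≤ s) {t : ℕ}
    (ht : rank r s (init r : St n) ≤ t) :
    ∃ ts, run r s f t = .done ts ∧ ∀ a, evalT ts a = f a := by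
  have hInv := run_invariant hN hr hs (f := f) t
  have hdone : ∃ ts, run r s f t = .done ts := by
    rcases run_reaches hN hr hs (f := f) t with h | h
    · exact h
    · by_contra hc
      push_neg at hc
      have := rank_pos_of_not_done hInv hc
      omega
  obtain ⟨ts, hts⟩ := hdone
  refine ⟨ts, hts, ?_⟩
  rw [hts] at hInv
  exact hInv

/-- the query map of the algorithm -/
noncomputable def sig (n r s : ℕ) : List Bool → (Fin n → Bool) :=
  fun h => qry (h.foldl (upd r s) (init r))

/-- the output map of the algorithm -/
noncomputable def outp (n r s : ℕ) : List Bool → ((Fin n → Bool) → Bool) :=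
  fun h => evalT (getTs (h.foldl (upd r s) (init r)))

lemma foldl_transcript (f : (Fin n → Bool) → Bool) :
    ∀ t, (transcript (sig n r s) f t).foldl (upd r s) (init r) = run r s f t
  | 0 => rfl
  | t + 1 => by
    rw [transcript, List.foldl_append, foldl_transcript f t]
    show upd r s (run r s f t) (f (sig n r s (transcript (sig n r s) f t))) = _
    rw [sig, foldl_transcript f t]
    rfl

lemma learn (hN : Nice f r s) (hr : 1 ≤ r) (hs : 1 ≤ s) {m : ℕ}
    (hm : rank r s (init r : St n) ≤ m) :
    outp n r s (transcript (sig n r s) f m) = f := by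
  obtain ⟨ts, hts, heval⟩ := run_done hN hr hs (f := f) hm
  funext a
  rw [outp, foldl_transcript f m, hts]
  exact heval a

/-- geometric sum bound -/
lemma G_le (hr : 1 ≤ r) (hs : 1 ≤ s) : G r s 0 ≤ 2 * r ^ (s - 1) + s := by
  rcases Nat.lt_or_ge r 2 with h2 | h2
  · have : r = 1 := by omega
    subst this
    have : G 1 s 0 = s := by simp [G]
    omega
  · have key : ∀ m : ℕ, (r - 1) * G r m 0 + 1 = r ^ m := by
      intro m
      induction m with
      | zero => simp [G]
      | succ m ih =>
        have : G r (m + 1) 0 = G r m 0 + r ^ m := by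
          rw [G, G, Finset.sum_Ico_succ_top (Nat.zero_le _)]
        rw [this, Nat.mul_add, pow_succ]
        have hr1 : r * r ^ m = (r - 1) * r ^ m + r ^ m := mul_split hr
        have hc : r ^ m * r = r * r ^ m := Nat.mul_comm _ _
        omega
    have hk := key s
    have hrs : r ^ s = r * r ^ (s - 1) := by
      nth_rewrite 1 [show s = (s - 1) + 1 by omega]
      rw [pow_succ]
      ring
    have hb : r * r ^ (s - 1) ≤ (2 * (r - 1)) * r ^ (s - 1) :=
      Nat.mul_le_mul_right _ (by omega)
    have : (r - 1) * G r s 0 < (r - 1) * (2 * r ^ (s - 1)) := by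
      calc (r - 1) * G r s 0 < r ^ s := by omega
        _ ≤ (2 * (r - 1)) * r ^ (s - 1) := by rw [hrs]; exact hb
        _ = (r - 1) * (2 * r ^ (s - 1)) := by ring
    have := Nat.lt_of_mul_lt_mul_left this
    omega

lemma G1_le_G0 : G r s 1 ≤ G r s 0 :=
  Finset.sum_le_sum_of_subset (Finset.Ico_subset_Ico (Nat.zero_le _) le_rfl)

lemma rank_init_le (hr : 1 ≤ r) (hs : 1 ≤ s) :
    rank r s (init r : St n) ≤
      2 * r ^ (s - 1) + s + 1 + s * ((r + 2) * (Nat.size n + 2) + 2) := by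
  have h0 : rank r s (init r : St n) = G r s 1 + 1 + s * Mc n r := by
    simp [rank, init, allv]
  rw [h0, Mc]
  have h1 := G1_le_G0 (r := r) (s := s)
  have h2 := G_le hr hs
  omega

end Nice2

lemma size_le_two_logb {n : ℕ} (hn : 2 ≤ n) :
    (Nat.size n : ℝ) ≤ 2 * Real.logb 2 n := by
  have hpos : 0 < Nat.size n := Nat.size_pos.mpr (by omega)
  have h2 : 2 ^ (Nat.size n - 1) ≤ n := Nat.lt_size.mp (by omega)
  have hlogb1 : (1 : ℝ) ≤ Real.logb 2 n := by
    have := Real.logb_le_logb_of_le (b := 2) (by norm_num) (by norm_num)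
      (by exact_mod_cast hn : (2:ℝ) ≤ n)
    rwa [Real.logb_self_eq_one (by norm_num)] at this
  have hkey : ((Nat.size n - 1 : ℕ) : ℝ) ≤ Real.logb 2 n := by
    have hcast : ((2 ^ (Nat.size n - 1) : ℕ) : ℝ) ≤ (n : ℝ) := by exact_mod_cast h2
    have := Real.logb_le_logb_of_le (b := 2) (by norm_num) (by positivity) hcast
    rwa [Nat.cast_pow, Nat.cast_ofNat, Real.logb_pow,
      Real.logb_self_eq_one (by norm_num), mul_one] at this
  have : ((Nat.size n : ℕ) : ℝ) ≤ Real.logb 2 n + 1 := by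
    have : ((Nat.size n - 1 : ℕ) : ℝ) = (Nat.size n : ℝ) - 1 := by
      have := hpos
      push_cast [Nat.cast_sub (by omega : 1 ≤ Nat.size n)]
      ring
    linarith [hkey, this.symm.le]
  linarith

end MDNF

theorem deterministic_upper_bound_exhaustive :
    ∃ c : ℝ, 0 < c ∧ ∀ n r s : ℕ, 2 ≤ n → 1 ≤ r → 1 ≤ s →
      ∃ (σ : List Bool → (Fin n → Bool)) (out : List Bool → ((Fin n → Bool) → Bool)),
        ∀ f : (Fin n → Bool) → Bool, IsMDNF n s r f →
          out (transcript σ f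
            ⌈c * ((r : ℝ) ^ (s - 1) + (r : ℝ) * s * Real.logb 2 n)⌉₊) = f := by
  refine ⟨16, by norm_num, ?_⟩
  intro n r s hn hr hs
  refine ⟨MDNF.sig n r s, MDNF.outp n r s, ?_⟩
  intro f hf
  have hN := MDNF.isMDNF_nice hf
  apply MDNF.learn hN hr hs
  set L := Real.logb 2 n with hLdef
  have hL1 : (1 : ℝ) ≤ L := by
    have := Real.logb_le_logb_of_le (b := 2) (by norm_num) (by norm_num)
      (by exact_mod_cast hn : (2:ℝ) ≤ n)
    rwa [Real.logb_self_eq_one (by norm_num)] at this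
  have hsize : (Nat.size n : ℝ) ≤ 2 * L := MDNF.size_le_two_logb hn
  have hK := MDNF.rank_init_le (n := n) hr hs
  have hr1 : (1 : ℝ) ≤ (r : ℝ) := by exact_mod_cast hr
  have hs1 : (1 : ℝ) ≤ (s : ℝ) := by exact_mod_cast hs
  have hpow : (1 : ℝ) ≤ (r : ℝ) ^ (s - 1) := one_le_pow₀ hr1
  have hreal :
      ((2 * r ^ (s - 1) + s + 1 + s * ((r + 2) * (Nat.size n + 2) + 2) : ℕ) : ℝ) ≤
        16 * ((r : ℝ) ^ (s - 1) + (r : ℝ) * s * L) := by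
    push_cast
    set S := (Nat.size n : ℝ) with hSdef
    have hS0 : (0 : ℝ) ≤ S := Nat.cast_nonneg _
    have h1 : S + 2 ≤ 4 * L := by linarith
    have h2 : (r : ℝ) + 2 ≤ 3 * r := by linarith
    have h3 : ((r : ℝ) + 2) * (S + 2) ≤ 3 * (r : ℝ) * (4 * L) := by
      apply mul_le_mul h2 h1 (by linarith) (by linarith)
    have h4 : (s : ℝ) * (((r : ℝ) + 2) * (S + 2) + 2) ≤
        (s : ℝ) * (12 * ((r : ℝ) * L) + 2) := by
      apply mul_le_mul_of_nonneg_left _ (by linarith)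
      nlinarith
    have h5 : (1 : ℝ) ≤ (r : ℝ) * L := by nlinarith
    have h6 : (s : ℝ) * (12 * ((r : ℝ) * L) + 2) = 12 * ((r:ℝ) * s * L) + 2 * s := by
      ring
    have h7 : (s : ℝ) ≤ (r : ℝ) * s * L := by nlinarith
    linarith
  have hceil := Nat.le_ceil (16 * ((r : ℝ) ^ (s - 1) + (r : ℝ) * s * L))
  have hfin : ((MDNF.rank r s (MDNF.init r : MDNF.St n) : ℕ) : ℝ) ≤
      ((⌈16 * ((r : ℝ) ^ (s - 1) + (r : ℝ) * s * L)⌉₊ : ℕ) : ℝ) := by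
    refine le_trans ?_ (hreal.trans hceil)
    exact_mod_cast hK
  exact_mod_cast hfin
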